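/- For the point-target SIMO configuration, the continuum (integral) approximations η(u) = 1/4 + (u/2)·arctan(1/(2u)) + u·arcsinh(1/(2u)) and β(u) = 1/2 + u·arcsinh(1/(2u)) satisfy η(u) − β(u)² = 1/(2880 u⁴) + O(1/u⁶) as u → ∞. -/

import Mathlib

open Filter

private lemma arctan_upper (t : ℝ) (ht : 0 ≤ t) :
    Real.arctan t ≤ t - t^3/3 + t^5/5 := by
  have hder : ∀ x : ℝ, HasDerivAt (fun x : ℝ => Real.arctan x - (x - x^3/3 + x^5/5))
      (1/(1+x^2) - (1 - x^2 + x^4)) x := by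
    intro x
    have hp : HasDerivAt (fun x : ℝ => x - x^3/3 + x^5/5) (1 - x^2 + x^4) x := by
      have := ((hasDerivAt_id x).sub ((hasDerivAt_pow 3 x).div_const 3)).add
        ((hasDerivAt_pow 5 x).div_const 5)
      refine this.congr_deriv ?_
      push_cast
      ring
    exact (Real.hasDerivAt_arctan x).sub hp
  have H : AntitoneOn (fun x : ℝ => Real.arctan x - (x - x^3/3 + x^5/5)) (Set.Ici 0) := by
    apply antitoneOn_of_deriv_nonpos (convex_Ici 0)
    · exact (Real.continuous_arctan.sub (by continuity)).continuousOn
    · intro x _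
      exact (hder x).differentiableAt.differentiableWithinAt
    · intro x _
      rw [(hder x).deriv]
      have hpos : (0:ℝ) < 1 + x^2 := by positivity
      have : 1/(1+x^2) ≤ 1 - x^2 + x^4 := by
        rw [div_le_iff₀ hpos]; nlinarith [sq_nonneg (x^3)]
      linarith
  have := H Set.self_mem_Ici (Set.mem_Ici.mpr ht) ht
  simp [Real.arctan_zero] at this
  linarith

private lemma arctan_lower (t : ℝ) (ht : 0 ≤ t) :
    t - t^3/3 + t^5/5 - t^7/7 ≤ Real.arctan t := by
  have hder : ∀ x : ℝ, HasDerivAt (fun x : ℝ => Real.arctan x - (x - x^3/3 + x^5/5 - x^7/7))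
      (1/(1+x^2) - (1 - x^2 + x^4 - x^6)) x := by
    intro x
    have hp : HasDerivAt (fun x : ℝ => x - x^3/3 + x^5/5 - x^7/7) (1 - x^2 + x^4 - x^6) x := by
      have := (((hasDerivAt_id x).sub ((hasDerivAt_pow 3 x).div_const 3)).add
        ((hasDerivAt_pow 5 x).div_const 5)).sub ((hasDerivAt_pow 7 x).div_const 7)
      refine this.congr_deriv ?_
      push_cast
      ring
    exact (Real.hasDerivAt_arctan x).sub hp
  have H : MonotoneOn (fun x : ℝ => Real.arctan x - (x - x^3/3 + x^5/5 - x^7/7)) (Set.Ici 0) := by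
    apply monotoneOn_of_deriv_nonneg (convex_Ici 0)
    · exact (Real.continuous_arctan.sub (by continuity)).continuousOn
    · intro x _
      exact (hder x).differentiableAt.differentiableWithinAt
    · intro x _
      rw [(hder x).deriv]
      have hpos : (0:ℝ) < 1 + x^2 := by positivity
      have : 1 - x^2 + x^4 - x^6 ≤ 1/(1+x^2) := by
        rw [le_div_iff₀ hpos]; nlinarith [sq_nonneg (x^4)]
      linarith
  have := H Set.self_mem_Ici (Set.mem_Ici.mpr ht) ht
  simp [Real.arctan_zero] at this
  linarith

private lemma sqrt_inv_upper (x : ℝ) (h0 : 0 ≤ x) (h1 : x ≤ 1) :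
    (Real.sqrt (1 + x^2))⁻¹ ≤ 1 - x^2/2 + 3*x^4/8 := by
  set s := Real.sqrt (1 + x^2) with hs
  have hs2 : s^2 = 1 + x^2 := Real.sq_sqrt (by positivity)
  have hspos : 0 < s := Real.sqrt_pos.mpr (by positivity)
  have hx2 : x^2 ≤ 1 := by nlinarith
  have hP : (0:ℝ) < 1 - x^2/2 + 3*x^4/8 := by nlinarith
  have hkey : 1 ≤ (1 + x^2) * (1 - x^2/2 + 3*x^4/8)^2 := by
    nlinarith [pow_nonneg h0 6, pow_nonneg h0 10,
      mul_nonneg (pow_nonneg h0 6) (sub_nonneg.mpr hx2)]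
  rw [inv_eq_one_div, div_le_iff₀ hspos]
  nlinarith [mul_pos hP hspos, sq_nonneg ((1 - x^2/2 + 3*x^4/8) * s - 1)]

private lemma sqrt_inv_lower (x : ℝ) (h0 : 0 ≤ x) (h1 : x ≤ 1) :
    1 - x^2/2 + 3*x^4/8 - 5*x^6/16 ≤ (Real.sqrt (1 + x^2))⁻¹ := by
  set s := Real.sqrt (1 + x^2) with hs
  have hs2 : s^2 = 1 + x^2 := Real.sq_sqrt (by positivity)
  have hspos : 0 < s := Real.sqrt_pos.mpr (by positivity)
  have hx2 : x^2 ≤ 1 := by nlinarith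
  have hQ : (0:ℝ) < 1 - x^2/2 + 3*x^4/8 - 5*x^6/16 := by
    nlinarith [pow_nonneg h0 4, mul_nonneg (pow_nonneg h0 4) (sub_nonneg.mpr hx2),
      mul_nonneg (mul_nonneg (pow_nonneg h0 2) (pow_nonneg h0 2)) (sub_nonneg.mpr hx2)]
  have hkey : (1 + x^2) * (1 - x^2/2 + 3*x^4/8 - 5*x^6/16)^2 ≤ 1 := by
    nlinarith [pow_nonneg h0 8, pow_nonneg h0 12, pow_nonneg h0 14,
      mul_nonneg (pow_nonneg h0 8) (sub_nonneg.mpr hx2),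
      mul_nonneg (pow_nonneg h0 12) (sub_nonneg.mpr hx2)]
  rw [inv_eq_one_div, le_div_iff₀ hspos]
  nlinarith [mul_pos hQ hspos, sq_nonneg ((1 - x^2/2 + 3*x^4/8 - 5*x^6/16) * s - 1)]

private lemma arsinh_upper (t : ℝ) (ht : 0 ≤ t) (ht1 : t ≤ 1) :
    Real.arsinh t ≤ t - t^3/6 + 3*t^5/40 := by
  have hder : ∀ x : ℝ, HasDerivAt (fun x : ℝ => Real.arsinh x - (x - x^3/6 + 3*x^5/40))
      ((Real.sqrt (1 + x^2))⁻¹ - (1 - x^2/2 + 3*x^4/8)) x := by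
    intro x
    have hp : HasDerivAt (fun x : ℝ => x - x^3/6 + 3*x^5/40) (1 - x^2/2 + 3*x^4/8) x := by
      have := ((hasDerivAt_id x).sub ((hasDerivAt_pow 3 x).div_const 6)).add
        (((hasDerivAt_pow 5 x).const_mul 3).div_const 40)
      refine this.congr_deriv ?_
      push_cast
      ring
    exact (Real.hasDerivAt_arsinh x).sub hp
  have H : AntitoneOn (fun x : ℝ => Real.arsinh x - (x - x^3/6 + 3*x^5/40)) (Set.Icc 0 1) := by
    apply antitoneOn_of_deriv_nonpos (convex_Icc 0 1)
    · exact (Real.continuous_arsinh.sub (by continuity)).continuousOn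
    · intro x _
      exact (hder x).differentiableAt.differentiableWithinAt
    · intro x hx
      rw [interior_Icc] at hx
      rw [(hder x).deriv]
      have := sqrt_inv_upper x hx.1.le hx.2.le
      linarith
  have h0 : (0:ℝ) ∈ Set.Icc (0:ℝ) 1 := by constructor <;> norm_num
  have := H h0 ⟨ht, ht1⟩ ht
  simp [Real.arsinh_zero] at this
  linarith

private lemma arsinh_lower (t : ℝ) (ht : 0 ≤ t) (ht1 : t ≤ 1) :
    t - t^3/6 + 3*t^5/40 - 5*t^7/112 ≤ Real.arsinh t := by
  have hder : ∀ x : ℝ, HasDerivAt (fun x : ℝ => Real.arsinh x - (x - x^3/6 + 3*x^5/40 - 5*x^7/112))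
      ((Real.sqrt (1 + x^2))⁻¹ - (1 - x^2/2 + 3*x^4/8 - 5*x^6/16)) x := by
    intro x
    have hp : HasDerivAt (fun x : ℝ => x - x^3/6 + 3*x^5/40 - 5*x^7/112)
        (1 - x^2/2 + 3*x^4/8 - 5*x^6/16) x := by
      have := (((hasDerivAt_id x).sub ((hasDerivAt_pow 3 x).div_const 6)).add
        (((hasDerivAt_pow 5 x).const_mul 3).div_const 40)).sub
        (((hasDerivAt_pow 7 x).const_mul 5).div_const 112)
      refine this.congr_deriv ?_
      push_cast
      ring
    exact (Real.hasDerivAt_arsinh x).sub hp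
  have H : MonotoneOn (fun x : ℝ => Real.arsinh x - (x - x^3/6 + 3*x^5/40 - 5*x^7/112))
      (Set.Icc 0 1) := by
    apply monotoneOn_of_deriv_nonneg (convex_Icc 0 1)
    · exact (Real.continuous_arsinh.sub (by continuity)).continuousOn
    · intro x _
      exact (hder x).differentiableAt.differentiableWithinAt
    · intro x hx
      rw [interior_Icc] at hx
      rw [(hder x).deriv]
      have := sqrt_inv_lower x hx.1.le hx.2.le
      linarith
  have h0 : (0:ℝ) ∈ Set.Icc (0:ℝ) 1 := by constructor <;> norm_num
  have := H h0 ⟨ht, ht1⟩ ht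
  simp [Real.arsinh_zero] at this
  linarith

private lemma key (t : ℝ) (h0 : 0 ≤ t) (h1 : t ≤ 1/2) :
    |t * Real.arctan t - (Real.arsinh t)^2 - t^6/45| ≤ t^8 := by
  have ht1 : t ≤ 1 := by linarith
  have hAu := arctan_upper t h0
  have hAl := arctan_lower t h0
  have hSu := arsinh_upper t h0 ht1
  have hSl := arsinh_lower t h0 ht1
  have ht2 : t^2 ≤ 1 := by nlinarith
  have ha : t^3 ≤ t := by nlinarith [mul_nonneg h0 (sub_nonneg.mpr ht2)]
  have hb : t^7 ≤ t := by
    nlinarith [mul_nonneg (pow_nonneg h0 3) (sub_nonneg.mpr ht2),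
      mul_nonneg (pow_nonneg h0 5) (sub_nonneg.mpr ht2),
      mul_nonneg h0 (sub_nonneg.mpr ht2)]
  have hLpos : 0 ≤ t - t^3/6 + 3*t^5/40 - 5*t^7/112 := by
    have := pow_nonneg h0 5
    linarith
  have hS0 : 0 ≤ Real.arsinh t := Real.arsinh_nonneg_iff.mpr h0
  have hS2u : (Real.arsinh t)^2 ≤ (t - t^3/6 + 3*t^5/40)^2 := by nlinarith
  have hS2l : (t - t^3/6 + 3*t^5/40 - 5*t^7/112)^2 ≤ (Real.arsinh t)^2 := by nlinarith
  have hTAu : t * Real.arctan t ≤ t * (t - t^3/3 + t^5/5) :=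
    mul_le_mul_of_nonneg_left hAu h0
  have hTAl : t * (t - t^3/3 + t^5/5 - t^7/7) ≤ t * Real.arctan t :=
    mul_le_mul_of_nonneg_left hAl h0
  rw [abs_le]
  constructor
  · nlinarith [hTAl, hS2u, pow_nonneg h0 8, pow_nonneg h0 10,
      mul_nonneg (pow_nonneg h0 8) (sub_nonneg.mpr ht2)]
  · nlinarith [hTAu, hS2l, pow_nonneg h0 8, pow_nonneg h0 10, pow_nonneg h0 14,
      mul_nonneg (pow_nonneg h0 8) (sub_nonneg.mpr ht2),
      mul_nonneg (mul_nonneg (pow_nonneg h0 8) (pow_nonneg h0 2)) (sub_nonneg.mpr ht2)]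

/-- Point-target SIMO: `η(u) − β(u)² = 1/(2880u⁴) + O(1/u⁶)` as `u → ∞`. -/
theorem pt_simo_crb_asymptotics :
    (fun u : ℝ =>
      (1/4 + (u/2) * Real.arctan (1/(2*u)) + u * Real.arsinh (1/(2*u)))
        - (1/2 + u * Real.arsinh (1/(2*u)))^2
        - 1/(2880*u^4))
      =O[atTop] (fun u : ℝ => 1/u^6) := by
  rw [Asymptotics.isBigO_iff]
  refine ⟨1, ?_⟩
  filter_upwards [eventually_ge_atTop (1:ℝ)] with u hu
  have hu0 : (0:ℝ) < u := by linarith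
  set t : ℝ := 1/(2*u) with htdef
  have ht0 : 0 ≤ t := by positivity
  have ht1 : t ≤ 1/2 := by
    rw [htdef, div_le_div_iff₀ (by positivity) (by norm_num)]
    linarith
  have hk := key t ht0 ht1
  set A := Real.arctan t
  set S := Real.arsinh t
  have hexpand :
      (1/4 + (u/2) * A + u * S) - (1/2 + u * S)^2 - 1/(2880*u^4)
        = u^2 * (t * A - S^2 - t^6/45) := by
    have ht6 : u^2 * (t^6/45) = 1/(2880*u^4) := by
      rw [htdef]; field_simp; ring
    have htA : u^2 * (t * A) = (u/2) * A := by
      have : u^2 * t = u/2 := by rw [htdef]; field_simp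
      calc u^2 * (t * A) = (u^2 * t) * A := by ring
        _ = (u/2) * A := by rw [this]
    linear_combination ht6 - htA
  have ht8 : u^2 * t^8 = 1/(256*u^6) := by
    rw [htdef]; field_simp; ring
  rw [Real.norm_eq_abs, Real.norm_eq_abs, hexpand, abs_mul, abs_of_nonneg (sq_nonneg u),
    abs_of_nonneg (by positivity : (0:ℝ) ≤ 1/u^6), one_mul]
  calc u^2 * |t * A - S^2 - t^6/45| ≤ u^2 * t^8 :=
        mul_le_mul_of_nonneg_left hk (sq_nonneg u)
    _ = 1/(256*u^6) := ht8
    _ ≤ 1/u^6 := by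
        apply div_le_div_of_nonneg_left (by norm_num) (by positivity)
        nlinarith [pow_pos hu0 6]
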